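/- In ℝ², let M = (1,2) so that ⟨ξ⟩_M = (1+ξ₁²+ξ₂⁴)^{1/2}, and consider the symbol P(x,ξ) = i x₁ ξ₁ − ξ₁ + ξ₂² of the operator x₁∂_{x₁} + i∂_{x₁} − ∂²_{x₂}. For 0 < k < 1 let X_k = {(ξ₁,ξ₂) ∈ ℝ² : ξ₁ ≤ (1−k)ξ₂² or ξ₁ ≥ ξ₂²/(1−k)}. Then for every x₂⁰ ∈ ℝ and every 0 < k < 1 there exist constants c > 0 and ε′ > 0 such that |P((0,x₂⁰),ξ)| ≥ c ⟨ξ⟩_M for all ξ ∈ (X_k)_{[ε′⟨·⟩_M]}; that is, P is microlocally [⟨·⟩_M]-elliptic in X_k at every point (0,x₂⁰). -/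

import Mathlib

open MeasureTheory

/-- The quasi-homogeneous weight `⟨ξ⟩_M = (1 + ξ₁² + ξ₂⁴)^(1/2)` on `ℝ²`, for `M = (1,2)`. -/
noncomputable def qw2 (ξ : ℝ × ℝ) : ℝ :=
  Real.sqrt (1 + ξ.1 ^ 2 + ξ.2 ^ 4)

/-- The symbol `P(x,ξ) = i x₁ ξ₁ - ξ₁ + ξ₂²` of the operator `x₁∂₁ + i∂₁ - ∂₂²`. -/
noncomputable def Psymb (x ξ : ℝ × ℝ) : ℂ :=
  Complex.I * (x.1 : ℂ) * (ξ.1 : ℂ) - (ξ.1 : ℂ) + (ξ.2 : ℂ) ^ 2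

/-- The set `X_k = {ξ ∈ ℝ² : ξ₁ ≤ (1-k) ξ₂²  or  ξ₁ ≥ ξ₂²/(1-k)}`. -/
def Xk (k : ℝ) : Set (ℝ × ℝ) :=
  {ξ | ξ.1 ≤ (1 - k) * ξ.2 ^ 2 ∨ ξ.2 ^ 2 / (1 - k) ≤ ξ.1}

/-- The `[⟨·⟩_M]`-neighborhood of size `ε` of `X ⊆ ℝ²`. -/
def brNbhd2 (ε : ℝ) (X : Set (ℝ × ℝ)) : Set (ℝ × ℝ) :=
  ⋃ ξ₀ ∈ X, {ξ | qw2 (ξ - ξ₀) < ε * qw2 ξ₀}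

lemma qw2_sq (ξ : ℝ × ℝ) : qw2 ξ ^ 2 = 1 + ξ.1 ^ 2 + ξ.2 ^ 4 := by
  rw [qw2, Real.sq_sqrt]; positivity

lemma one_le_qw2 (ξ : ℝ × ℝ) : 1 ≤ qw2 ξ := by
  have h : (1:ℝ) ≤ 1 + ξ.1 ^ 2 + ξ.2 ^ 4 := by nlinarith [sq_nonneg ξ.1, sq_nonneg (ξ.2^2)]
  have := Real.sqrt_le_sqrt h
  simpa [qw2] using this

lemma abs_fst_le_qw2 (ξ : ℝ × ℝ) : |ξ.1| ≤ qw2 ξ := by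
  rw [qw2, ← Real.sqrt_sq_eq_abs]
  apply Real.sqrt_le_sqrt
  nlinarith [sq_nonneg (ξ.2^2)]

lemma sq_snd_le_qw2 (ξ : ℝ × ℝ) : ξ.2 ^ 2 ≤ qw2 ξ := by
  have h : ξ.2 ^ 2 = Real.sqrt ((ξ.2^2)^2) := by
    rw [Real.sqrt_sq (by positivity)]
  rw [h, qw2]
  apply Real.sqrt_le_sqrt
  nlinarith [sq_nonneg ξ.1]

lemma qw2_le (ξ : ℝ × ℝ) : qw2 ξ ≤ 1 + |ξ.1| + ξ.2 ^ 2 := by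
  rw [qw2, show 1 + |ξ.1| + ξ.2^2 = Real.sqrt ((1 + |ξ.1| + ξ.2^2)^2) from
    (Real.sqrt_sq (by positivity)).symm]
  apply Real.sqrt_le_sqrt
  have h1 : 0 ≤ |ξ.1| := abs_nonneg _
  have h2 : ξ.1^2 = |ξ.1|^2 := (sq_abs _).symm
  nlinarith [sq_nonneg ξ.2, mul_nonneg h1 (sq_nonneg ξ.2)]

lemma ell_aux (k a b Q : ℝ) (hk : 0 < k) (hk1 : k < 1) (hQ2 : 2 ≤ Q)
    (hQsq : Q ^ 2 = 1 + a ^ 2 + b ^ 4) (hQle : Q ≤ 1 + |a| + b ^ 2)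
    (hX : a ≤ (1 - k) * b ^ 2 ∨ b ^ 2 / (1 - k) ≤ a) :
    k / 3 * Q ≤ |b ^ 2 - a| := by
  have h1k : 0 < 1 - k := by linarith
  have hb2 : (0:ℝ) ≤ b ^ 2 := sq_nonneg b
  rcases hX with h | h
  · have hv : 0 ≤ b ^ 2 - a := by nlinarith
    rw [abs_of_nonneg hv]
    rcases le_or_gt a 0 with ha | ha
    · rw [abs_of_nonpos ha] at hQle
      have hvsq : (b ^ 2 - a) ^ 2 ≥ 3 := by nlinarith [mul_nonneg (neg_nonneg.2 ha) hb2]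
      have hv1 : 1 ≤ b ^ 2 - a := by nlinarith
      nlinarith
    · rw [abs_of_pos ha] at hQle
      have hab : a ≤ b ^ 2 := by nlinarith
      have hb1 : 1 ≤ b ^ 2 := by nlinarith [sq_nonneg (b^2 - a), sq_nonneg (b^2+a)]
      nlinarith
  · have hba : b ^ 2 ≤ (1 - k) * a := by
      rw [div_le_iff₀ h1k] at h; nlinarith
    have ha : 0 ≤ a := by nlinarith
    have hv : 0 ≤ a - b ^ 2 := by nlinarith
    rw [abs_sub_comm, abs_of_nonneg hv]
    rw [abs_of_nonneg ha] at hQle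
    have hba' : b ^ 2 ≤ a := by nlinarith
    have ha1 : 1 ≤ a := by nlinarith [sq_nonneg (a - b^2), sq_nonneg (a + b^2)]
    nlinarith

set_option maxHeartbeats 1000000 in
/-- The symbol `P(x,ξ) = i x₁ ξ₁ - ξ₁ + ξ₂²` is microlocally `[⟨·⟩_M]`-elliptic in `X_k`
at every point `(0, x₂⁰)`: there are `c > 0` and `ε' > 0` with
`|P((0,x₂⁰),ξ)| ≥ c ⟨ξ⟩_M` for all `ξ ∈ (X_k)_{[ε'⟨·⟩_M]}`. -/
theorem Psymb_microlocally_elliptic :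
    ∀ (x₂0 : ℝ) (k : ℝ), 0 < k → k < 1 →
      ∃ c ε' : ℝ, 0 < c ∧ 0 < ε' ∧
        ∀ ξ ∈ brNbhd2 ε' (Xk k), c * qw2 ξ ≤ ‖Psymb (0, x₂0) ξ‖ := by
  intro x₂0 k hk hk1
  refine ⟨k / 30, k ^ 2 / 576, by positivity, by positivity, ?_⟩
  intro ξ hξ
  simp only [brNbhd2, Set.mem_iUnion, Set.mem_setOf_eq] at hξ
  obtain ⟨ξ₀, hX, hnear⟩ := hξ
  simp only [Xk, Set.mem_setOf_eq] at hX
  -- compute |Psymb|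
  have hP : ‖Psymb (0, x₂0) ξ‖ = |ξ.2 ^ 2 - ξ.1| := by
    have h : Psymb (0, x₂0) ξ = ((ξ.2 ^ 2 - ξ.1 : ℝ) : ℂ) := by
      simp only [Psymb]
      push_cast
      ring
    rw [h, Complex.norm_real, Real.norm_eq_abs]
  rw [hP]
  -- gather all analytic facts, then discard the definitions
  set a := ξ₀.1 with ha'
  set b := ξ₀.2 with hb'
  set p := ξ.1 with hp'
  set q := ξ.2 with hq'
  set Q := qw2 ξ₀ with hQ'
  set R := qw2 ξ with hR'
  have hQsq : Q ^ 2 = 1 + a ^ 2 + b ^ 4 := qw2_sq ξ₀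
  have hQle : Q ≤ 1 + |a| + b ^ 2 := qw2_le ξ₀
  have hRle : R ≤ 1 + |p| + q ^ 2 := qw2_le ξ
  have hbQ : b ^ 2 ≤ Q := sq_snd_le_qw2 ξ₀
  have haQ : |a| ≤ Q := abs_fst_le_qw2 ξ₀
  have hQ1 : 1 ≤ Q := one_le_qw2 ξ₀
  have hR1 : 1 ≤ R := one_le_qw2 ξ
  have hsub1 : (ξ - ξ₀).1 = p - a := rfl
  have hsub2 : (ξ - ξ₀).2 = q - b := rfl
  have he : |p - a| < k ^ 2 / 576 * Q := by
    have := abs_fst_le_qw2 (ξ - ξ₀); rw [hsub1] at this; linarith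
  have hd : (q - b) ^ 2 < k ^ 2 / 576 * Q := by
    have := sq_snd_le_qw2 (ξ - ξ₀); rw [hsub2] at this; linarith
  have hone : (1:ℝ) < k ^ 2 / 576 * Q := lt_of_le_of_lt (one_le_qw2 (ξ - ξ₀)) hnear
  clear_value a b p q Q R
  clear hnear hsub1 hsub2 ha' hb' hp' hq' hQ' hR' hP
  have hQpos : (0:ℝ) < Q := by linarith
  have hRpos : (0:ℝ) < R := by linarith
  -- Q is large
  have hQbig : 576 < Q := by
    have hk2 : k ^ 2 ≤ 1 := by nlinarith
    have h3 : k ^ 2 * Q ≤ 1 * Q := mul_le_mul_of_nonneg_right hk2 hQpos.le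
    linarith
  -- ellipticity on Xk
  have hA : k / 3 * Q ≤ |b ^ 2 - a| :=
    ell_aux k a b Q hk hk1 (by linarith) hQsq hQle hX
  set d := q - b with hd'
  set e := p - a with he'
  clear_value d e
  -- triangle inequality
  have key : |b ^ 2 - a| - (2 * |b| * |d| + d ^ 2 + |e|) ≤ |q ^ 2 - p| := by
    have hrepr : b ^ 2 - a = (q ^ 2 - p) - (2 * b * d + d ^ 2 - e) := by
      rw [hd', he']; ring
    have h1 : |b ^ 2 - a| ≤ |q ^ 2 - p| + |2 * b * d + d ^ 2 - e| := by
      rw [hrepr]; exact abs_sub _ _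
    have h2 : |2 * b * d + d ^ 2 - e| ≤ 2 * |b| * |d| + d ^ 2 + |e| := by
      calc |2 * b * d + d ^ 2 - e| ≤ |2 * b * d + d ^ 2| + |e| := abs_sub _ _
        _ ≤ |2 * b * d| + |d ^ 2| + |e| := by linarith [abs_add_le (2*b*d) (d^2)]
        _ = 2 * |b| * |d| + d ^ 2 + |e| := by
            rw [abs_mul, abs_mul, abs_two, abs_of_nonneg (sq_nonneg d)]
    linarith
  -- bound the cross term
  have h2bd : 2 * |b| * |d| * (12 * k) ≤ k ^ 2 * b ^ 2 + 144 * d ^ 2 := by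
    nlinarith [sq_nonneg (k * |b| - 12 * |d|), sq_abs b, sq_abs d]
  have hd2 : d ^ 2 < k ^ 2 / 576 * Q := hd
  have he2 : |e| < k ^ 2 / 576 * Q := he
  have hkk : k ^ 2 ≤ k := by nlinarith
  have hkkQ : k ^ 2 * Q ≤ k * Q := mul_le_mul_of_nonneg_right hkk hQpos.le
  have hkQ : k ^ 2 / 576 * Q ≤ k / 576 * Q := by linarith
  have hcross : 2 * |b| * |d| ≤ 5 * k / 48 * Q := by
    have h12k : (0:ℝ) < 12 * k := by positivity
    have hb2 : k ^ 2 * b ^ 2 ≤ k ^ 2 * Q :=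
      mul_le_mul_of_nonneg_left hbQ (sq_nonneg k)
    have h3 : 2 * |b| * |d| * (12 * k) ≤ 5 * k / 48 * Q * (12 * k) := by
      linarith only [hd2, hb2, h2bd]
    exact le_of_mul_le_mul_right h3 h12k
  -- main lower bound
  have hmain : k / 6 * Q ≤ |q ^ 2 - p| := by linarith
  -- upper bound on R = qw2 ξ
  have hkQ1 : k ^ 2 / 576 * Q ≤ Q := by nlinarith [hkkQ, mul_le_mul_of_nonneg_right hk1.le hQpos.le]
  have hkQ3 : 5 * k / 48 * Q ≤ Q := by nlinarith [mul_le_mul_of_nonneg_right hk1.le hQpos.le]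
  have hR5 : R ≤ 5 * Q := by
    have hp2 : |p| ≤ |a| + |e| := by
      have hp3 : p = a + e := by rw [he']; ring
      rw [hp3]; exact abs_add_le _ _
    have hq2 : q ^ 2 ≤ b ^ 2 + 2 * |b| * |d| + d ^ 2 := by
      have hq3 : q ^ 2 = b ^ 2 + 2 * b * d + d ^ 2 := by rw [hd']; ring
      rw [hq3]
      have h5 : 2 * b * d ≤ |2 * b * d| := le_abs_self _
      have habs : |2 * b * d| = 2 * |b| * |d| := by rw [abs_mul, abs_mul, abs_two]
      linarith
    linarith
  calc k / 30 * R ≤ k / 30 * (5 * Q) := by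
        apply mul_le_mul_of_nonneg_left hR5 (by positivity)
    _ = k / 6 * Q := by ring
    _ ≤ |q ^ 2 - p| := hmain
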